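/- In the setting where S(u) ∈ Mat_{2n}(𝒜) satisfies the reflection equation with shift ρ and B(u) is its upper-right n×n block, set Ř(u) := P·R(u) on ℂⁿ ⊗ ℂⁿ. Then for all admissible u₁, u₂ (u₁ ≠ u₂, u₁+u₂+ρ ≠ 0): Ř₁₂(u₁−u₂) B₁(u₁) R^t₁₂(−u₁−u₂−ρ) B₂(u₂) = B₁(u₂) R^t₁₂(−u₁−u₂−ρ) B₂(u₁) Ř₁₂(u₁−u₂), where R(u) = I − u⁻¹P and R^t(u) = I − u⁻¹Q with Q = Σ_{i,j} e_{ij} ⊗ e_{j̄ ī} of orthogonal type (ī = n−i+1) on ℂⁿ ⊗ ℂⁿ. (This is the matrix form of the exchange identity for the creation operator β in the paper's Lemma on creation-operator identities.) -/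

import Mathlib

noncomputable section

open Matrix

/-- The permutation operator `P` on `ℂ^N ⊗ ℂ^N`. -/
def permP (N : ℕ) : Matrix (Fin N × Fin N) (Fin N × Fin N) ℂ :=
  fun x y => if x.1 = y.2 ∧ x.2 = y.1 then 1 else 0

/-- The operator `Q = Σ θ_{ij} e_{ij} ⊗ e_{ī j̄}`, `ī = N − i + 1` being `Fin.rev`. -/
def Qop (N : ℕ) (θ : Fin N → ℂ) : Matrix (Fin N × Fin N) (Fin N × Fin N) ℂ :=
  fun x y => if x.2 = Fin.rev x.1 ∧ y.2 = Fin.rev y.1 then θ x.1 * θ y.1 else 0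

/-- The Yang R-matrix `R(u) = I − u⁻¹P` with entries mapped into an algebra `A`. -/
def yangRA (N : ℕ) (A : Type*) [Ring A] [Algebra ℂ A] (u : ℂ) :
    Matrix (Fin N × Fin N) (Fin N × Fin N) A :=
  ((1 : Matrix _ _ ℂ) - u⁻¹ • permP N).map (algebraMap ℂ A)

/-- `R^t(u) = I − u⁻¹Q` with entries mapped into an algebra `A`. -/
def yangRtA (N : ℕ) (θ : Fin N → ℂ) (A : Type*) [Ring A] [Algebra ℂ A] (u : ℂ) :
    Matrix (Fin N × Fin N) (Fin N × Fin N) A :=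
  ((1 : Matrix _ _ ℂ) - u⁻¹ • Qop N θ).map (algebraMap ℂ A)

/-- `Ř(u) = P·R(u)` with entries mapped into an algebra `A`. -/
def yangRcheckA (N : ℕ) (A : Type*) [Ring A] [Algebra ℂ A] (u : ℂ) :
    Matrix (Fin N × Fin N) (Fin N × Fin N) A :=
  (permP N * ((1 : Matrix _ _ ℂ) - u⁻¹ • permP N)).map (algebraMap ℂ A)

/-- `X₁ = X ⊗ I`. -/
def op1 {N : ℕ} {A : Type*} [Ring A] (X : Matrix (Fin N) (Fin N) A) :
    Matrix (Fin N × Fin N) (Fin N × Fin N) A :=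
  fun x y => if x.2 = y.2 then X x.1 y.1 else 0

/-- `X₂ = I ⊗ X`. -/
def op2 {N : ℕ} {A : Type*} [Ring A] (X : Matrix (Fin N) (Fin N) A) :
    Matrix (Fin N × Fin N) (Fin N × Fin N) A :=
  fun x y => if x.1 = y.1 then X x.2 y.2 else 0

/-- Embedding `Fin n → Fin (2n)`, `i ↦ i`. -/
def lo (n : ℕ) (i : Fin n) : Fin (2 * n) := ⟨i.1, by have := i.2; omega⟩

/-- Embedding `Fin n → Fin (2n)`, `i ↦ n + i`. -/
def hi (n : ℕ) (i : Fin n) : Fin (2 * n) := ⟨n + i.1, by have := i.2; omega⟩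

/-- The upper-right block `B(u)`. -/
def blockB {n : ℕ} {A : Type*} (X : Matrix (Fin (2 * n)) (Fin (2 * n)) A) :
    Matrix (Fin n) (Fin n) A := fun i j => X (lo n i) (hi n j)

/-- The orthogonal-type signs on `ℂⁿ` (all equal to `1`). -/
def orthTheta (n : ℕ) : Fin n → ℂ := fun _ => 1


section Helpers

set_option linter.unusedSectionVars false

variable {N : ℕ} {A : Type*} [Ring A] [Algebra ℂ A]

lemma op1_mul_apply (S : Matrix (Fin N) (Fin N) A)
    (X : Matrix (Fin N × Fin N) (Fin N × Fin N) A) (p q : Fin N) (y : Fin N × Fin N) :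
    (op1 S * X) (p, q) y = ∑ m, S p m * X (m, q) y := by
  rw [mul_apply, Fintype.sum_prod_type]
  simp [op1, ite_mul, Finset.sum_ite_eq, Finset.sum_ite_eq']

lemma op2_mul_apply (T : Matrix (Fin N) (Fin N) A)
    (X : Matrix (Fin N × Fin N) (Fin N × Fin N) A) (p q : Fin N) (y : Fin N × Fin N) :
    (op2 T * X) (p, q) y = ∑ w, T q w * X (p, w) y := by
  rw [mul_apply, Fintype.sum_prod_type]
  simp [op2, ite_mul, Finset.sum_ite_eq, Finset.sum_ite_eq']

lemma mul_op2_apply (T : Matrix (Fin N) (Fin N) A)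
    (X : Matrix (Fin N × Fin N) (Fin N × Fin N) A) (x : Fin N × Fin N) (k l : Fin N) :
    (X * op2 T) x (k, l) = ∑ w, X x (k, w) * T w l := by
  rw [mul_apply, Fintype.sum_prod_type]
  simp [op2, mul_ite, Finset.sum_ite_eq, Finset.sum_ite_eq']

lemma mul_op1_apply (S : Matrix (Fin N) (Fin N) A)
    (X : Matrix (Fin N × Fin N) (Fin N × Fin N) A) (x : Fin N × Fin N) (k l : Fin N) :
    (X * op1 S) x (k, l) = ∑ m, X x (m, l) * S m k := by
  rw [mul_apply, Fintype.sum_prod_type, Finset.sum_comm]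
  simp [op1, mul_ite, Finset.sum_ite_eq, Finset.sum_ite_eq']

lemma eq_rev_comm {i j : Fin N} : (i = Fin.rev j) = (j = Fin.rev i) :=
  propext ⟨fun h => by subst h; exact (Fin.rev_rev j).symm,
           fun h => by subst h; exact (Fin.rev_rev i).symm⟩

lemma Qmap_mul_op2 (θ : Fin N → ℂ) (T : Matrix (Fin N) (Fin N) A) (m q k l : Fin N) :
    ((Qop N θ).map (algebraMap ℂ A) * op2 T) (m, q) (k, l)
      = if q = Fin.rev m then (θ m * θ k) • T (Fin.rev k) l else 0 := by
  rw [mul_apply, Fintype.sum_prod_type]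
  simp [Qop, op2, Matrix.map_apply, apply_ite (algebraMap ℂ A), ite_mul, mul_ite, ite_and,
    Finset.sum_ite_eq, Finset.sum_ite_eq', eq_rev_comm, Algebra.smul_def]

lemma op1_Q_op2 (θ : Fin N → ℂ) (S T : Matrix (Fin N) (Fin N) A) (p q k l : Fin N) :
    (op1 S * ((Qop N θ).map (algebraMap ℂ A)) * op2 T) (p, q) (k, l)
      = (θ (Fin.rev q) * θ k) • (S p (Fin.rev q) * T (Fin.rev k) l) := by
  rw [mul_assoc, op1_mul_apply]
  simp [Qmap_mul_op2, mul_ite, eq_rev_comm (i := q), Finset.sum_ite_eq,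
    Finset.sum_ite_eq', mul_smul_comm]

lemma Qmap_mul_op1 (θ : Fin N → ℂ) (S : Matrix (Fin N) (Fin N) A) (p w c d : Fin N) :
    ((Qop N θ).map (algebraMap ℂ A) * op1 S) (p, w) (c, d)
      = if w = Fin.rev p then (θ p * θ (Fin.rev d)) • S (Fin.rev d) c else 0 := by
  rw [mul_apply, Fintype.sum_prod_type]
  simp [Qop, op1, Matrix.map_apply, apply_ite (algebraMap ℂ A), ite_mul, mul_ite, ite_and,
    Finset.sum_ite_eq, Finset.sum_ite_eq', eq_rev_comm, Algebra.smul_def]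

lemma op2_Q_op1 (θ : Fin N → ℂ) (S T : Matrix (Fin N) (Fin N) A) (p q c d : Fin N) :
    (op2 T * ((Qop N θ).map (algebraMap ℂ A)) * op1 S) (p, q) (c, d)
      = (θ p * θ (Fin.rev d)) • (T q (Fin.rev p) * S (Fin.rev d) c) := by
  rw [mul_assoc, op2_mul_apply]
  simp [Qmap_mul_op1, mul_ite, Finset.sum_ite_eq, Finset.sum_ite_eq', mul_smul_comm]

lemma op1_mul_op2_apply (S T : Matrix (Fin N) (Fin N) A) (p q k l : Fin N) :
    (op1 S * op2 T) (p, q) (k, l) = S p k * T q l := by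
  rw [op1_mul_apply]
  simp [op2, mul_ite, Finset.sum_ite_eq, Finset.sum_ite_eq']

lemma op2_mul_op1_apply (S T : Matrix (Fin N) (Fin N) A) (p q c d : Fin N) :
    (op2 T * op1 S) (p, q) (c, d) = T q d * S p c := by
  rw [op2_mul_apply]
  simp [op1, mul_ite, Finset.sum_ite_eq, Finset.sum_ite_eq']

lemma algS (r x : ℂ) : algebraMap ℂ A (r * x) = r • algebraMap ℂ A x := by
  rw [_root_.map_mul, Algebra.smul_def]

lemma yangRtA_eq (θ : Fin N → ℂ) (u : ℂ) :
    yangRtA N θ A u = (1 : Matrix _ _ A) - u⁻¹ • (Qop N θ).map (algebraMap ℂ A) := by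
  ext x y
  simp [yangRtA, Matrix.map_apply, Matrix.one_apply, Matrix.sub_apply, Matrix.smul_apply,
    smul_eq_mul, algS, apply_ite (algebraMap ℂ A)]

lemma yangRA_eq (u : ℂ) :
    yangRA N A u = (1 : Matrix _ _ A) - u⁻¹ • (permP N).map (algebraMap ℂ A) := by
  ext x y
  simp [yangRA, Matrix.map_apply, Matrix.one_apply, Matrix.sub_apply, Matrix.smul_apply,
    smul_eq_mul, algS, apply_ite (algebraMap ℂ A)]

lemma permP_mul_permP : permP N * permP N = 1 := by
  ext ⟨p, q⟩ ⟨k, l⟩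
  rw [mul_apply, Fintype.sum_prod_type]
  simp [permP, Matrix.one_apply, ite_and, ite_mul, mul_ite, Finset.sum_ite_eq,
    Finset.sum_ite_eq', Prod.ext_iff, eq_comm (a := p), eq_comm (a := q)]

lemma yangRcheckA_eq (u : ℂ) :
    yangRcheckA N A u
      = (permP N).map (algebraMap ℂ A) - u⁻¹ • (1 : Matrix _ _ A) := by
  have h : permP N * ((1 : Matrix _ _ ℂ) - u⁻¹ • permP N) = permP N - u⁻¹ • 1 := by
    rw [mul_sub, mul_one, mul_smul_comm, permP_mul_permP]
  rw [yangRcheckA, h]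
  ext x y
  simp [Matrix.map_apply, Matrix.one_apply, Matrix.sub_apply, Matrix.smul_apply,
    smul_eq_mul, algS, apply_ite (algebraMap ℂ A), Algebra.algebraMap_eq_smul_one]
  split <;> simp [sub_smul]

lemma Pmap_mul_apply (X : Matrix (Fin N × Fin N) (Fin N × Fin N) A) (p q : Fin N)
    (y : Fin N × Fin N) :
    ((permP N).map (algebraMap ℂ A) * X) (p, q) y = X (q, p) y := by
  rw [mul_apply, Fintype.sum_prod_type]
  simp [permP, Matrix.map_apply, apply_ite (algebraMap ℂ A), ite_and, ite_mul,
    Finset.sum_ite_eq, Finset.sum_ite_eq', eq_comm (a := p), eq_comm (a := q)]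

lemma mul_Pmap_apply (X : Matrix (Fin N × Fin N) (Fin N × Fin N) A) (x : Fin N × Fin N)
    (k l : Fin N) :
    (X * (permP N).map (algebraMap ℂ A)) x (k, l) = X x (l, k) := by
  rw [mul_apply, Fintype.sum_prod_type]
  simp [permP, Matrix.map_apply, apply_ite (algebraMap ℂ A), ite_and, mul_ite,
    Finset.sum_ite_eq, Finset.sum_ite_eq']

lemma midform (w : ℂ) (θ : Fin N → ℂ) (S T : Matrix (Fin N) (Fin N) A) (p q k l : Fin N) :
    (op1 S * yangRtA N θ A w * op2 T) (p, q) (k, l)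
      = S p k * T q l
        - (w⁻¹ * (θ (Fin.rev q) * θ k)) • (S p (Fin.rev q) * T (Fin.rev k) l) := by
  rw [yangRtA_eq]
  simp only [mul_sub, sub_mul, mul_one, mul_smul_comm, smul_mul_assoc, Matrix.sub_apply,
    Matrix.smul_apply, op1_mul_op2_apply, op1_Q_op2, smul_smul]

lemma midform' (w : ℂ) (θ : Fin N → ℂ) (S T : Matrix (Fin N) (Fin N) A) (p q k l : Fin N) :
    (op1 S * (yangRtA N θ A w * op2 T)) (p, q) (k, l)
      = S p k * T q l
        - (w⁻¹ * (θ (Fin.rev q) * θ k)) • (S p (Fin.rev q) * T (Fin.rev k) l) := by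
  rw [← mul_assoc]; exact midform w θ S T p q k l

lemma Yform (w : ℂ) (θ : Fin N → ℂ) (S T : Matrix (Fin N) (Fin N) A) (p q c d : Fin N) :
    (op2 T * yangRtA N θ A w * op1 S) (p, q) (c, d)
      = T q d * S p c
        - (w⁻¹ * (θ p * θ (Fin.rev d))) • (T q (Fin.rev p) * S (Fin.rev d) c) := by
  rw [yangRtA_eq]
  simp only [mul_sub, sub_mul, mul_one, mul_smul_comm, smul_mul_assoc, Matrix.sub_apply,
    Matrix.smul_apply, op2_mul_op1_apply, op2_Q_op1, smul_smul]

lemma RA_left (w : ℂ) (X : Matrix (Fin N × Fin N) (Fin N × Fin N) A) (p q : Fin N)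
    (y : Fin N × Fin N) :
    (yangRA N A w * X) (p, q) y = X (p, q) y - w⁻¹ • X (q, p) y := by
  rw [yangRA_eq, sub_mul, one_mul, smul_mul_assoc, Matrix.sub_apply, Matrix.smul_apply,
    Pmap_mul_apply]

lemma RA_right (w : ℂ) (X : Matrix (Fin N × Fin N) (Fin N × Fin N) A) (x : Fin N × Fin N)
    (k l : Fin N) :
    (X * yangRA N A w) x (k, l) = X x (k, l) - w⁻¹ • X x (l, k) := by
  rw [yangRA_eq, mul_sub, mul_one, mul_smul_comm, Matrix.sub_apply, Matrix.smul_apply,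
    mul_Pmap_apply]

lemma Rcheck_left (w : ℂ) (X : Matrix (Fin N × Fin N) (Fin N × Fin N) A) (p q : Fin N)
    (y : Fin N × Fin N) :
    (yangRcheckA N A w * X) (p, q) y = X (q, p) y - w⁻¹ • X (p, q) y := by
  rw [yangRcheckA_eq, sub_mul, smul_mul_assoc, one_mul, Matrix.sub_apply, Matrix.smul_apply,
    Pmap_mul_apply]

lemma Rcheck_right (w : ℂ) (X : Matrix (Fin N × Fin N) (Fin N × Fin N) A) (x : Fin N × Fin N)
    (k l : Fin N) :
    (X * yangRcheckA N A w) x (k, l) = X x (l, k) - w⁻¹ • X x (k, l) := by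
  rw [yangRcheckA_eq, mul_sub, mul_smul_comm, mul_one, Matrix.sub_apply, Matrix.smul_apply,
    mul_Pmap_apply]

end Helpers

lemma rev_lo {n : ℕ} (i : Fin n) : Fin.rev (lo n i) = hi n (Fin.rev i) := by
  ext
  simp [Fin.rev, lo, hi]
  omega

lemma rev_hi {n : ℕ} (i : Fin n) : Fin.rev (hi n i) = lo n (Fin.rev i) := by
  ext
  simp [Fin.rev, lo, hi]
  omega

/-- the braided BB exchange relation for the upper-right block of a
solution `S(u)` of the reflection equation with shift `ρ`:
`Ř₁₂(u₁−u₂) B₁(u₁) R^t₁₂(−u₁−u₂−ρ) B₂(u₂) = B₁(u₂) R^t₁₂(−u₁−u₂−ρ) B₂(u₁) Ř₁₂(u₁−u₂)`,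
with `Ř(u) = P·R(u)` and `Q` of orthogonal type on `ℂⁿ ⊗ ℂⁿ`. -/
theorem block_BB_braided_relation (n : ℕ) (ρ : ℂ) (θ : Fin (2 * n) → ℂ)
    (hcase : (∀ i, θ i = 1) ∨
      (∀ i : Fin (2 * n), θ i = if (i : ℕ) < n then -1 else 1))
    (A : Type*) [Ring A] [Algebra ℂ A]
    (S : ℂ → Matrix (Fin (2 * n)) (Fin (2 * n)) A)
    (D : Set ℂ) (hD : Dᶜ.Finite)
    (hRE : ∀ u ∈ D, ∀ v ∈ D, u ≠ v → u + v + ρ ≠ 0 →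
      yangRA (2 * n) A (u - v) * op1 (S u) * yangRtA (2 * n) θ A (-u - v - ρ) * op2 (S v) =
        op2 (S v) * yangRtA (2 * n) θ A (-u - v - ρ) * op1 (S u)
          * yangRA (2 * n) A (u - v)) :
    ∀ u₁ ∈ D, ∀ u₂ ∈ D, u₁ ≠ u₂ → u₁ + u₂ + ρ ≠ 0 →
      yangRcheckA n A (u₁ - u₂) * op1 (blockB (S u₁))
          * yangRtA n (orthTheta n) A (-u₁ - u₂ - ρ) * op2 (blockB (S u₂)) =
        op1 (blockB (S u₂)) * yangRtA n (orthTheta n) A (-u₁ - u₂ - ρ)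
          * op2 (blockB (S u₁)) * yangRcheckA n A (u₁ - u₂) := by
  intro u₁ h₁ u₂ h₂ hne hsum
  have hlo : ∀ x y : Fin n, θ (lo n x) * θ (lo n y) = 1 := by
    intro x y
    rcases hcase with h | h
    · simp [h]
    · rw [h, h]
      simp only [lo]
      simp only [x.2, y.2, ↓reduceIte]
      norm_num
  have hhi : ∀ x y : Fin n, θ (hi n x) * θ (hi n y) = 1 := by
    intro x y
    rcases hcase with h | h
    · simp [h]
    · rw [h, h]
      simp only [hi]
      simp only [show ¬ (n + (x : ℕ) < n) by omega, show ¬ (n + (y : ℕ) < n) by omega, ↓reduceIte]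
      norm_num
  have E := hRE u₁ h₁ u₂ h₂ hne hsum
  ext ⟨i, j⟩ ⟨k, l⟩
  have E' := congrFun (congrFun E (lo n j, lo n i)) (hi n k, hi n l)
  have EL : (yangRA (2 * n) A (u₁ - u₂) * (op1 (S u₁) *
        (yangRtA (2 * n) θ A (-u₁ - u₂ - ρ) * op2 (S u₂)))) (lo n j, lo n i) (hi n k, hi n l)
      = (op2 (S u₂) * yangRtA (2 * n) θ A (-u₁ - u₂ - ρ) * op1 (S u₁)
          * yangRA (2 * n) A (u₁ - u₂)) (lo n j, lo n i) (hi n k, hi n l) := by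
    rw [← mul_assoc, ← mul_assoc]; exact E'
  rw [RA_left, midform', midform', RA_right, Yform, Yform] at EL
  simp only [rev_lo, rev_hi, hhi, hlo, mul_one] at EL
  have e1 : yangRcheckA n A (u₁ - u₂) * op1 (blockB (S u₁))
        * yangRtA n (orthTheta n) A (-u₁ - u₂ - ρ) * op2 (blockB (S u₂))
      = yangRcheckA n A (u₁ - u₂) * (op1 (blockB (S u₁))
        * (yangRtA n (orthTheta n) A (-u₁ - u₂ - ρ) * op2 (blockB (S u₂)))) := by
    simp only [mul_assoc]
  rw [e1, Rcheck_left, midform', midform', Rcheck_right, midform, midform]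
  simp only [blockB, orthTheta, one_mul, mul_one]
  exact EL
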